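/- For every nonzero real number x, with B(x) = sin(π(i − 1/x))/sin(π(i + 1/x)), the series ∑_{n ≥ 0} (−1)^n · e^{−2nπ} · B(x)^{n+1} converges absolutely and exp(2iπ/x) = e^{−2π} + (1 − e^{−4π}) · ∑_{n ≥ 0} (−1)^n · e^{−2nπ} · B(x)^{n+1}. (This is an explicit unwinding decomposition of the singular inner function exp(2iπ/x), where B is the Blaschke product whose zeros are the points 1/(j+i), j ∈ ℤ.) -/

import Mathlib

open Complex Real

/-- Explicit unwinding of the singular inner function `exp(2iπ/x)`: for real `x ≠ 0`, with
`B(x) = sin(π(i − 1/x))/sin(π(i + 1/x))`, the series `∑_{n≥0} (−1)^n e^{−2nπ} B(x)^{n+1}`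
converges absolutely and
`exp(2iπ/x) = e^{−2π} + (1 − e^{−4π})·∑_{n≥0} (−1)^n e^{−2nπ} B(x)^{n+1}`. -/
theorem singular_inner_unwinding (B : ℝ → ℂ)
    (hB : ∀ x : ℝ, B x =
      Complex.sin ((π : ℂ) * (I - 1 / (x : ℂ))) / Complex.sin ((π : ℂ) * (I + 1 / (x : ℂ))))
    (x : ℝ) (hx : x ≠ 0) :
    Summable (fun n : ℕ =>
      ‖(-1 : ℂ) ^ n * Complex.exp (-2 * (n : ℂ) * (π : ℂ)) * B x ^ (n + 1)‖) ∧
    Complex.exp (2 * I * (π : ℂ) / (x : ℂ)) =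
      Complex.exp (-2 * (π : ℂ)) + (1 - Complex.exp (-4 * (π : ℂ))) *
        ∑' n : ℕ, (-1 : ℂ) ^ n * Complex.exp (-2 * (n : ℂ) * (π : ℂ)) * B x ^ (n + 1) := by
  have hx' : (x : ℂ) ≠ 0 := by exact_mod_cast hx
  set t : ℝ := π / x with ht
  have htc : ((t : ℝ) : ℂ) = (π : ℂ) / (x : ℂ) := by rw [ht]; push_cast; ring
  set a : ℝ := Real.exp (-2 * π) with ha
  have ha0 : 0 < a := Real.exp_pos _
  have ha1 : a < 1 := by
    rw [ha, Real.exp_lt_one_iff]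
    nlinarith [Real.pi_pos]
  set p : ℂ := Complex.exp (π : ℂ) with hp
  set v : ℂ := Complex.exp ((t : ℝ) * I) with hv
  have hp0 : p ≠ 0 := Complex.exp_ne_zero _
  have hv0 : v ≠ 0 := Complex.exp_ne_zero _
  have hvnorm : ‖v‖ = 1 := by
    rw [hv, Complex.norm_exp_ofReal_mul_I]
  have hpnorm : ‖p‖ = Real.exp π := by
    rw [hp, Complex.norm_exp]
    norm_num
  set w : ℂ := v * v with hw
  have hw0 : w ≠ 0 := mul_ne_zero hv0 hv0
  have hwnorm : ‖w‖ = 1 := by rw [hw, norm_mul, hvnorm]; norm_num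
  have hwconj : (starRingEnd ℂ) w = w⁻¹ := by
    rw [hw, hv, ← Complex.exp_add, ← Complex.exp_conj, ← Complex.exp_neg]
    congr 1
    simp only [map_add, map_mul, Complex.conj_I, Complex.conj_ofReal]
    ring
  have haC : ((a : ℝ) : ℂ) = Complex.exp (-2 * (π : ℂ)) := by
    rw [ha, Complex.ofReal_exp]; push_cast; ring_nf
  have hap : ((a : ℝ) : ℂ) * (p * p) = 1 := by
    rw [haC, hp, ← Complex.exp_add, ← Complex.exp_add, ← Complex.exp_zero]
    ring_nf
  -- the two sine values
  have hsin1 : Complex.sin ((π : ℂ) * (I - 1 / (x : ℂ))) = (p * v - (p * v)⁻¹) * I / 2 := by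
    rw [Complex.sin]
    congr 2
    · congr 1
      · rw [hp, hv, ← Complex.exp_add]
        congr 1
        rw [htc]
        have : I * I = -1 := Complex.I_mul_I
        field_simp
        ring_nf
        rw [Complex.I_sq]
        ring
      · rw [hp, hv, ← Complex.exp_add, ← Complex.exp_neg]
        congr 1
        rw [htc]
        field_simp
        ring_nf
        rw [Complex.I_sq]
        ring
  have hsin2 : Complex.sin ((π : ℂ) * (I + 1 / (x : ℂ))) = (p * v⁻¹ - p⁻¹ * v) * I / 2 := by
    rw [Complex.sin]
    congr 2
    congr 1
    · rw [hp, hv, ← Complex.exp_neg, ← Complex.exp_add]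
      congr 1
      rw [htc]
      field_simp
      ring_nf
      rw [Complex.I_sq]
      ring
    · rw [hp, hv, ← Complex.exp_neg, ← Complex.exp_add]
      congr 1
      rw [htc]
      field_simp
      ring_nf
      rw [Complex.I_sq]
      ring
  -- denominators nonzero
  have hden1 : p * v⁻¹ - p⁻¹ * v ≠ 0 := by
    intro h
    have h1 : p * v⁻¹ = p⁻¹ * v := by linear_combination h
    have h2 : ‖p * v⁻¹‖ = ‖p⁻¹ * v‖ := by rw [h1]
    rw [norm_mul, norm_mul, norm_inv, norm_inv, hvnorm, hpnorm] at h2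
    have hpi : (0:ℝ) < π := Real.pi_pos
    have e1 : (1:ℝ) < Real.exp π := by
      have := Real.exp_lt_exp.mpr hpi
      rwa [Real.exp_zero] at this
    rw [inv_one] at h2
    have : (Real.exp π)⁻¹ < 1 := by
      rw [inv_lt_one_iff₀]; right; exact e1
    nlinarith [Real.exp_pos π]
  have hden2 : (1 : ℂ) - (a : ℂ) * w ≠ 0 := by
    intro h
    have h1 : (a : ℂ) * w = 1 := by linear_combination -h
    have h2 : ‖(a : ℂ) * w‖ = 1 := by rw [h1, norm_one]
    rw [norm_mul, hwnorm, mul_one, Complex.norm_real, Real.norm_eq_abs,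
      abs_of_pos ha0] at h2
    linarith
  -- the key formula for B
  have haq : ((a : ℝ) : ℂ) = (p * p)⁻¹ := eq_inv_of_mul_eq_one_left hap
  have hBw : B x = (w - (a : ℂ)) / (1 - (a : ℂ) * w) := by
    rw [hB x, hsin1, hsin2]
    rw [div_eq_div_iff (by simp [hden1, Complex.I_ne_zero]) hden2]
    rw [haq, hw]
    field_simp
  have key : ‖(1 : ℂ) - (a : ℂ) * w‖ = ‖w - (a : ℂ)‖ := by
    have e : (1 : ℂ) - (a : ℂ) * w = w * ((starRingEnd ℂ) (w - (a : ℂ))) := by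
      rw [map_sub, hwconj, Complex.conj_ofReal]
      field_simp
    rw [e, norm_mul, RCLike.norm_conj, hwnorm, one_mul]
  have hBnorm : ‖B x‖ = 1 := by
    rw [hBw, norm_div, ← key, div_self (norm_ne_zero_iff.mpr hden2)]
  -- norms of the terms
  have hterm : ∀ n : ℕ, ‖(-1 : ℂ) ^ n * Complex.exp (-2 * (n : ℂ) * (π : ℂ)) * B x ^ (n + 1)‖
      = a ^ n := by
    intro n
    rw [norm_mul, norm_mul, norm_pow, norm_pow, norm_neg, norm_one, one_pow, one_mul,
      hBnorm, one_pow, mul_one, Complex.norm_exp]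
    have : (-2 * (n : ℂ) * (π : ℂ)).re = (n : ℝ) * (-2 * π) := by
      simp [Complex.mul_re, Complex.ofReal_re]
      ring
    rw [this, Real.exp_nat_mul, ha]
  have hsummable : Summable (fun n : ℕ =>
      ‖(-1 : ℂ) ^ n * Complex.exp (-2 * (n : ℂ) * (π : ℂ)) * B x ^ (n + 1)‖) := by
    apply Summable.congr (summable_geometric_of_lt_one ha0.le ha1)
    intro n
    exact (hterm n).symm
  refine ⟨hsummable, ?_⟩
  -- rewrite terms as geometric series
  set q : ℂ := -(a : ℂ) * B x with hq
  have hqnorm : ‖q‖ < 1 := by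
    rw [hq, norm_mul, norm_neg, hBnorm, mul_one, Complex.norm_real, Real.norm_eq_abs,
      abs_of_pos ha0]
    exact ha1
  have hterm2 : ∀ n : ℕ, (-1 : ℂ) ^ n * Complex.exp (-2 * (n : ℂ) * (π : ℂ)) * B x ^ (n + 1)
      = q ^ n * B x := by
    intro n
    have he : Complex.exp (-2 * (n : ℂ) * (π : ℂ)) = ((a : ℝ) : ℂ) ^ n := by
      rw [haC, ← Complex.exp_nat_mul]
      congr 1
      ring
    rw [he, hq, pow_succ]
    ring
  have htsum : ∑' n : ℕ, (-1 : ℂ) ^ n * Complex.exp (-2 * (n : ℂ) * (π : ℂ)) * B x ^ (n + 1)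
      = (1 - q)⁻¹ * B x := by
    rw [tsum_congr hterm2, tsum_mul_right, tsum_geometric_of_norm_lt_one hqnorm]
  rw [htsum]
  -- final algebraic identity
  have hlhs : Complex.exp (2 * I * (π : ℂ) / (x : ℂ)) = w := by
    rw [hw, hv, ← Complex.exp_add]
    congr 1
    rw [htc]
    field_simp
    ring
  have ha4 : Complex.exp (-4 * (π : ℂ)) = ((a : ℝ) : ℂ) ^ 2 := by
    rw [haC, ← Complex.exp_nat_mul]
    congr 1
    push_cast
    ring
  have h1a2 : (1 : ℂ) - ((a : ℝ) : ℂ) ^ 2 ≠ 0 := by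
    intro h
    have : ((1 - a ^ 2 : ℝ) : ℂ) = 0 := by push_cast; linear_combination h
    have h2 : (1 - a ^ 2 : ℝ) = 0 := by exact_mod_cast this
    nlinarith
  have hq1 : 1 - q = (1 - ((a : ℝ) : ℂ) ^ 2) / (1 - (a : ℂ) * w) := by
    rw [hq, hBw]
    field_simp
    ring
  have hq10 : 1 - q ≠ 0 := by
    rw [hq1]
    exact div_ne_zero h1a2 hden2
  rw [hlhs, ← haC, ha4, hq1, hBw]
  rw [inv_div]
  field_simp [hden2, h1a2]
  rw [mul_div_cancel_left₀ _ (by rwa [mul_comm] at hden2)]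
  ring
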